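/- For all ℓ ∈ {1,…,M} and i, j, k ∈ {0,…,N−1}, the sequence of vertices u_0, u_1, …, u_i, x_ℓ, v_j, v_{j−1}, …, v_0, w_k, w_{k+1}, …, w_{N−1} is a path in the max-plus gadget graph H with hop count exactly (N+2) + (i + j − k) and total weight 15W − a_ℓ[i] − b_ℓ[j] + c[k]. -/

import Mathlib

/-- Vertex set of the max-plus gadget graph: `U ⊕ V ⊕ W ⊕ X`. -/
abbrev MPVert (N M : ℕ) := (Fin N ⊕ Fin N) ⊕ (Fin N ⊕ Fin M)

/-- Vertex `u_i`. -/
def vu (N M : ℕ) (i : Fin N) : MPVert N M := Sum.inl (Sum.inl i)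
/-- Vertex `v_j`. -/
def vv (N M : ℕ) (j : Fin N) : MPVert N M := Sum.inl (Sum.inr j)
/-- Vertex `w_k`. -/
def vw (N M : ℕ) (k : Fin N) : MPVert N M := Sum.inr (Sum.inl k)
/-- Vertex `x_ℓ`. -/
def vx (N M : ℕ) (l : Fin M) : MPVert N M := Sum.inr (Sum.inr l)

/-- Adjacency (as a `Bool`) of the max-plus gadget graph. -/
def mpAdjB (N M : ℕ) : MPVert N M → MPVert N M → Bool
  | Sum.inl (Sum.inl i), Sum.inl (Sum.inl i') => i.val + 1 == i'.val || i'.val + 1 == i.val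
  | Sum.inl (Sum.inr j), Sum.inl (Sum.inr j') => j.val + 1 == j'.val || j'.val + 1 == j.val
  | Sum.inr (Sum.inl k), Sum.inr (Sum.inl k') => k.val + 1 == k'.val || k'.val + 1 == k.val
  | Sum.inl (Sum.inl _), Sum.inr (Sum.inr _) => true
  | Sum.inr (Sum.inr _), Sum.inl (Sum.inl _) => true
  | Sum.inr (Sum.inr _), Sum.inl (Sum.inr _) => true
  | Sum.inl (Sum.inr _), Sum.inr (Sum.inr _) => true
  | Sum.inl (Sum.inr j), Sum.inr (Sum.inl _) => j.val == 0
  | Sum.inr (Sum.inl _), Sum.inl (Sum.inr j) => j.val == 0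
  | _, _ => false

/-- The max-plus gadget graph. -/
def mpGraph (N M : ℕ) : SimpleGraph (MPVert N M) where
  Adj x y := mpAdjB N M x y = true
  symm := by
    constructor
    rintro ((i | j) | (k | l)) ((i' | j') | (k' | l')) h <;>
      simp_all [mpAdjB] <;> omega
  loopless := by
    constructor
    rintro ((i | j) | (k | l)) h <;> simp_all [mpAdjB]

/-- The edge weights of the max-plus gadget graph. -/
def mpW (N M : ℕ) (W : ℤ) (a b : Fin M → Fin N → ℤ) (c : Fin N → ℤ) :
    MPVert N M → MPVert N M → ℤ
  | Sum.inl (Sum.inl i), Sum.inr (Sum.inr l) => 5 * W - a l i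
  | Sum.inr (Sum.inr l), Sum.inl (Sum.inl i) => 5 * W - a l i
  | Sum.inr (Sum.inr l), Sum.inl (Sum.inr j) => 5 * W - b l j
  | Sum.inl (Sum.inr j), Sum.inr (Sum.inr l) => 5 * W - b l j
  | Sum.inl (Sum.inr _), Sum.inr (Sum.inl k) => 5 * W + c k
  | Sum.inr (Sum.inl k), Sum.inl (Sum.inr _) => 5 * W + c k
  | _, _ => 0

/-- The total weight of a walk: the sum of the weights of its edges, with multiplicity. -/
def walkWeight {V : Type*} {G : SimpleGraph V} (w : V → V → ℤ) {s t : V}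
    (p : G.Walk s t) : ℤ :=
  (p.darts.map fun d => w d.toProd.1 d.toProd.2).sum

-- adjacency helpers
lemma adj_uu (N M : ℕ) (m : ℕ) (h : m + 1 < N) :
    (mpGraph N M).Adj (vu N M ⟨m, by omega⟩) (vu N M ⟨m+1, h⟩) := by
  simp [mpGraph, mpAdjB, vu]

lemma adj_vv (N M : ℕ) (m : ℕ) (h : m + 1 < N) :
    (mpGraph N M).Adj (vv N M ⟨m+1, h⟩) (vv N M ⟨m, by omega⟩) := by
  simp [mpGraph, mpAdjB, vv]

lemma adj_ww (N M : ℕ) (m : ℕ) (h : m + 1 < N) :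
    (mpGraph N M).Adj (vw N M ⟨m, by omega⟩) (vw N M ⟨m+1, h⟩) := by
  simp [mpGraph, mpAdjB, vw]

lemma adj_ux (N M : ℕ) (i : Fin N) (l : Fin M) :
    (mpGraph N M).Adj (vu N M i) (vx N M l) := by
  simp [mpGraph, mpAdjB, vu, vx]

lemma adj_xv (N M : ℕ) (l : Fin M) (j : Fin N) :
    (mpGraph N M).Adj (vx N M l) (vv N M j) := by
  simp [mpGraph, mpAdjB, vv, vx]

lemma adj_v0w (N M : ℕ) (h0 : 0 < N) (k : Fin N) :
    (mpGraph N M).Adj (vv N M ⟨0, h0⟩) (vw N M k) := by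
  simp [mpGraph, mpAdjB, vv, vw]

-- chain walks
def walkU (N M : ℕ) (hN : 0 < N) : (m : ℕ) → (hm : m < N) →
    (mpGraph N M).Walk (vu N M ⟨0, hN⟩) (vu N M ⟨m, hm⟩)
  | 0, _ => SimpleGraph.Walk.nil
  | m+1, h => (walkU N M hN m (by omega)).concat (adj_uu N M m h)

def walkV (N M : ℕ) (hN : 0 < N) : (m : ℕ) → (hm : m < N) →
    (mpGraph N M).Walk (vv N M ⟨m, hm⟩) (vv N M ⟨0, hN⟩)
  | 0, _ => SimpleGraph.Walk.nil
  | m+1, h => SimpleGraph.Walk.cons (adj_vv N M m h) (walkV N M hN m (by omega))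

def walkW (N M : ℕ) (hN : 0 < N) (m : ℕ) (hm : m < N) :
    (mpGraph N M).Walk (vw N M ⟨m, hm⟩) (vw N M ⟨N-1, by omega⟩) :=
  if h : m = N - 1 then
    SimpleGraph.Walk.nil.copy (by congr; omega) rfl
  else
    SimpleGraph.Walk.cons (adj_ww N M m (by omega)) (walkW N M hN (m+1) (by omega))
  termination_by N - m

lemma walkU_support (N M : ℕ) (hN : 0 < N) (m : ℕ) (hm : m < N) :
    (walkU N M hN m hm).support = ((List.finRange N).take (m+1)).map (vu N M) := by
  induction m with
  | zero =>
    simp [walkU, List.take_succ, List.getElem?_eq_getElem (l := List.finRange N) (by simpa using hm)]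
  | succ m ih =>
    rw [walkU, SimpleGraph.Walk.support_concat, ih (by omega)]
    rw [List.take_succ (i := m+1), List.getElem?_eq_getElem (l := List.finRange N) (by simpa using hm)]
    simp

lemma walkU_length (N M : ℕ) (hN : 0 < N) (m : ℕ) (hm : m < N) :
    (walkU N M hN m hm).length = m := by
  induction m with
  | zero => rfl
  | succ m ih => rw [walkU]; simp [ih (by omega)]

lemma walkU_weight (N M : ℕ) (hN : 0 < N) (W : ℤ) (a b : Fin M → Fin N → ℤ)
    (c : Fin N → ℤ) (m : ℕ) (hm : m < N) :
    walkWeight (mpW N M W a b c) (walkU N M hN m hm) = 0 := by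
  induction m with
  | zero => rfl
  | succ m ih =>
    rw [walkU]
    simp [walkWeight] at ih ⊢
    rw [ih (by omega)]
    simp [mpW, vu]

lemma walkV_support (N M : ℕ) (hN : 0 < N) (m : ℕ) (hm : m < N) :
    (walkV N M hN m hm).support =
      (((List.finRange N).take (m+1)).reverse).map (vv N M) := by
  induction m with
  | zero =>
    simp [walkV, List.take_succ, List.getElem?_eq_getElem (l := List.finRange N) (by simpa using hm)]
  | succ m ih =>
    rw [walkV, SimpleGraph.Walk.support_cons, ih (by omega)]
    rw [List.take_succ (i := m+1), List.getElem?_eq_getElem (l := List.finRange N) (by simpa using hm)]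
    simp

lemma walkV_length (N M : ℕ) (hN : 0 < N) (m : ℕ) (hm : m < N) :
    (walkV N M hN m hm).length = m := by
  induction m with
  | zero => rfl
  | succ m ih => rw [walkV]; simp [ih (by omega)]

lemma walkV_weight (N M : ℕ) (hN : 0 < N) (W : ℤ) (a b : Fin M → Fin N → ℤ)
    (c : Fin N → ℤ) (m : ℕ) (hm : m < N) :
    walkWeight (mpW N M W a b c) (walkV N M hN m hm) = 0 := by
  induction m with
  | zero => rfl
  | succ m ih =>
    rw [walkV]
    simp [walkWeight] at ih ⊢
    rw [ih (by omega)]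
    simp [mpW, vv]

lemma walkW_support (N M : ℕ) (hN : 0 < N) (m : ℕ) (hm : m < N) :
    (walkW N M hN m hm).support = ((List.finRange N).drop m).map (vw N M) := by
  rw [walkW]
  split
  · next h =>
    subst h
    have : (List.finRange N).drop (N-1) = [⟨N-1, hm⟩] := by
      apply List.ext_getElem <;> simp <;> omega
    rw [this]
    simp
  · next h =>
    have hstep : ((List.finRange N).drop m).map (vw N M) =
        vw N M ⟨m, hm⟩ :: ((List.finRange N).drop (m+1)).map (vw N M) := by
      rw [List.drop_eq_getElem_cons (by simpa using hm)]; simp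
    rw [hstep, SimpleGraph.Walk.support_cons, walkW_support N M hN (m+1) (by omega)]
  termination_by N - m

lemma walkW_length (N M : ℕ) (hN : 0 < N) (m : ℕ) (hm : m < N) :
    (walkW N M hN m hm).length = N - 1 - m := by
  rw [walkW]
  split
  · next h => simp; omega
  · next h =>
    rw [SimpleGraph.Walk.length_cons, walkW_length N M hN (m+1) (by omega)]
    omega
  termination_by N - m

lemma walkW_weight (N M : ℕ) (hN : 0 < N) (W : ℤ) (a b : Fin M → Fin N → ℤ)
    (c : Fin N → ℤ) (m : ℕ) (hm : m < N) :
    walkWeight (mpW N M W a b c) (walkW N M hN m hm) = 0 := by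
  rw [walkW]
  split
  · next h => simp [walkWeight]
  · next h =>
    have := walkW_weight N M hN W a b c (m+1) (by omega)
    simp [walkWeight] at this ⊢
    rw [this]
    simp [mpW, vw]
  termination_by N - m

lemma vu_inj (N M : ℕ) : Function.Injective (vu N M) := by
  intro x y h; simpa [vu] using h
lemma vv_inj (N M : ℕ) : Function.Injective (vv N M) := by
  intro x y h; simpa [vv] using h
lemma vw_inj (N M : ℕ) : Function.Injective (vw N M) := by
  intro x y h; simpa [vw] using h


/-- For all `ℓ` and `i, j, k`, the vertex sequence
`u_0, …, u_i, x_ℓ, v_j, v_{j−1}, …, v_0, w_k, …, w_{N−1}` is a path in the max-plus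
gadget graph with exactly `(N+2) + (i + j − k)` hops and total weight
`15W − a_ℓ[i] − b_ℓ[j] + c[k]`. -/
theorem stmt9 (N M : ℕ) (hN : 1 ≤ N) (hM : 1 ≤ M) (W : ℤ) (hW : 1 ≤ W)
    (a b : Fin M → Fin N → ℤ) (c : Fin N → ℤ)
    (ha : ∀ l i, 0 ≤ a l i ∧ a l i ≤ W) (hb : ∀ l j, 0 ≤ b l j ∧ b l j ≤ W)
    (hc : ∀ k, 0 ≤ c k ∧ c k ≤ W)
    (l : Fin M) (i j k : Fin N) :
    ∃ p : (mpGraph N M).Walk (vu N M ⟨0, by omega⟩) (vw N M ⟨N - 1, by omega⟩),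
      p.IsPath ∧
      p.support = ((List.finRange N).take (i.val + 1)).map (vu N M) ++ [vx N M l] ++
          (((List.finRange N).take (j.val + 1)).reverse).map (vv N M) ++
          ((List.finRange N).drop k.val).map (vw N M) ∧
      (p.length : ℤ) = ((N : ℤ) + 2) + ((i.val : ℤ) + (j.val : ℤ) - (k.val : ℤ)) ∧
      walkWeight (mpW N M W a b c) p = 15 * W - a l i - b l j + c k := by
  have hN0 : 0 < N := hN
  refine ⟨(walkU N M hN0 i.val i.isLt).append
    (SimpleGraph.Walk.cons (adj_ux N M ⟨i.val, i.isLt⟩ l)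
      (SimpleGraph.Walk.cons (adj_xv N M l ⟨j.val, j.isLt⟩)
        ((walkV N M hN0 j.val j.isLt).append
          (SimpleGraph.Walk.cons (adj_v0w N M hN0 ⟨k.val, k.isLt⟩)
            (walkW N M hN0 k.val k.isLt))))), ?_, ?_, ?_, ?_⟩
  case refine_2 =>
    rw [SimpleGraph.Walk.support_append, walkU_support]
    simp only [SimpleGraph.Walk.support_cons, SimpleGraph.Walk.support_append,
      walkV_support, walkW_support, List.tail_cons]
    simp [List.append_assoc]
  case refine_3 =>
    simp only [SimpleGraph.Walk.length_append, SimpleGraph.Walk.length_cons,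
      walkU_length, walkV_length, walkW_length]
    have := k.isLt
    push_cast
    omega
  case refine_4 =>
    simp only [walkWeight, SimpleGraph.Walk.darts_append, SimpleGraph.Walk.darts_cons,
      List.map_append, List.map_cons, List.sum_append, List.sum_cons]
    have h1 := walkU_weight N M hN0 W a b c i.val i.isLt
    have h2 := walkV_weight N M hN0 W a b c j.val j.isLt
    have h3 := walkW_weight N M hN0 W a b c k.val k.isLt
    simp only [walkWeight] at h1 h2 h3
    rw [h1, h2, h3]
    simp [mpW, vu, vv, vw, vx]
    ring
  case refine_1 =>
    rw [SimpleGraph.Walk.isPath_def]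
    rw [SimpleGraph.Walk.support_append, walkU_support]
    simp only [SimpleGraph.Walk.support_cons, SimpleGraph.Walk.support_append,
      walkV_support, walkW_support, List.tail_cons]
    have hfin := List.nodup_finRange N
    refine List.Nodup.append ?_ (List.Nodup.cons ?_ (List.Nodup.append ?_ ?_ ?_)) ?_
    · exact (List.Nodup.sublist (List.take_sublist _ _) hfin).map (vu_inj N M)
    · intro hmem
      rw [List.mem_append] at hmem
      rcases hmem with h | h
      · have h2 := List.mem_of_mem_take (by simpa [List.map_take] using h)
        simp [vx, vv] at h2
      · have h2 := List.mem_of_mem_drop (by simpa [List.map_drop] using h)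
        simp [vx, vw] at h2
    · exact ((List.nodup_reverse.mpr (List.Nodup.sublist (List.take_sublist _ _) hfin)).map
        (vv_inj N M))
    · exact (List.Nodup.sublist (List.drop_sublist _ _) hfin).map (vw_inj N M)
    · intro x hx hx'
      simp only [List.mem_map, List.mem_reverse] at hx hx'
      obtain ⟨y, _, rfl⟩ := hx
      obtain ⟨z, _, hz⟩ := hx'
      simp [vv, vw] at hz
    · intro x hx hx'
      simp only [List.mem_map, List.mem_cons, List.mem_append, List.mem_reverse] at hx hx'
      obtain ⟨y, _, rfl⟩ := hx
      rcases hx' with h | h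
      · simp [vu, vx] at h
      · rcases h with ⟨z, _, hz⟩ | ⟨z, _, hz⟩ <;> simp [vu, vv, vw] at hz
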